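/- Let m ≥ 2 be an integer and B_1, B_2 > 1 real numbers with B_2 ≤ B_1^{1/2}. Then the set 𝓕^m_{B_1,B_2} = { x ∈ (0,1) irrational : a_n(x)·a_{n+1}(x)⋯a_{n+m−1}(x) ≥ B_1^n for infinitely many n ∈ ℕ, and a_{n+1}(x)·a_{n+2}(x)⋯a_{n+m−1}(x) < B_2^n for all sufficiently large n ∈ ℕ } is empty. -/

import Mathlib

open Filter MeasureTheory Set

/-- The Gauss map `T(x) = 1/x - ⌊1/x⌋`. -/
noncomputable def gaussMap (x : ℝ) : ℝ := 1 / x - (⌊1 / x⌋ : ℤ)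

/-- The `n`-th partial quotient `a_n(x)` (for `n ≥ 1`) of the continued
fraction expansion of `x`: `a_n(x) = ⌊1 / T^{n-1}(x)⌋`. -/
noncomputable def pq (x : ℝ) (n : ℕ) : ℕ := ⌊1 / (gaussMap^[n - 1] x)⌋₊

/-- The continuant `q_n(a_1, …, a_n)`: `q_0 = 1`, `q_1 = a_1`,
`q_k = a_k q_{k-1} + q_{k-2}`. -/
def contQ : (n : ℕ) → (Fin n → ℕ) → ℕ
  | 0, _ => 1
  | 1, a => a 0
  | (n + 2), a =>
      a (Fin.last (n + 1)) * contQ (n + 1) (Fin.init a) +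
        contQ n (Fin.init (Fin.init a))

/-- `s_B`: the Wang–Wu pressure exponent. -/
noncomputable def sExp (B : ℝ) : ℝ :=
  sInf {s : ℝ | 0 ≤ s ∧
    Filter.atTop.limsup (fun n : ℕ =>
      (((n : ℝ)⁻¹ : ℝ) : EReal) * ENNReal.log (∑' a : Fin n → ℕ+,
        ENNReal.ofReal ((B ^ n * ((contQ n fun i => (a i : ℕ)) : ℝ) ^ 2) ^ (-s)))) ≤ 0}

/-- `g_{B₁,B₂}`: the two-parameter pressure exponent. -/
noncomputable def gExp (B₁ B₂ : ℝ) : ℝ :=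
  sInf {s : ℝ | 0 ≤ s ∧
    Filter.atTop.limsup (fun n : ℕ =>
      (((n : ℝ)⁻¹ : ℝ) : EReal) * ENNReal.log (∑' a : Fin n → ℕ+,
        ENNReal.ofReal (B₂ ^ ((1 - s) * (n : ℝ)) *
          (B₁ ^ n * ((contQ n fun i => (a i : ℕ)) : ℝ) ^ 2) ^ (-s)))) ≤ 0}

theorem new_application_empty (m : ℕ) (hm : 2 ≤ m) (B₁ B₂ : ℝ)
    (hB₁ : 1 < B₁) (hB₂ : 1 < B₂) (hcase : B₂ ≤ B₁ ^ ((1 : ℝ) / 2)) :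
    {x : ℝ | x ∈ Set.Ioo (0 : ℝ) 1 ∧ Irrational x ∧
      {n : ℕ | B₁ ^ n ≤ ∏ i ∈ Finset.range m, (pq x (n + i) : ℝ)}.Infinite ∧
      (∀ᶠ n : ℕ in Filter.atTop,
        ∏ i ∈ Finset.range (m - 1), (pq x (n + 1 + i) : ℝ) < B₂ ^ n)} = ∅ := by
  ext x
  simp only [Set.mem_setOf_eq, Set.mem_empty_iff_false, iff_false]
  rintro ⟨hx, hirr, hinf, hev⟩
  -- iterates stay irrational in (0,1)
  have hiter : ∀ k, gaussMap^[k] x ∈ Set.Ioo (0 : ℝ) 1 ∧ Irrational (gaussMap^[k] x) := by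
    intro k
    induction k with
    | zero => exact ⟨hx, hirr⟩
    | succ k ih =>
      obtain ⟨⟨hy0, hy1⟩, hyirr⟩ := ih
      set y := gaussMap^[k] x with hy
      have hfract : gaussMap y = Int.fract (1 / y) := rfl
      have hinv : Irrational (1 / y) := by
        rw [one_div]; exact hyirr.inv
      have hgirr : Irrational (gaussMap y) := by
        rw [hfract, Int.fract]; exact Irrational.sub_intCast hinv _
      have hne : gaussMap y ≠ 0 := hgirr.ne_zero
      have h0le : 0 ≤ gaussMap y := by rw [hfract]; exact Int.fract_nonneg _
      have hlt1 : gaussMap y < 1 := by rw [hfract]; exact Int.fract_lt_one _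
      rw [Function.iterate_succ_apply']
      exact ⟨⟨lt_of_le_of_ne h0le (Ne.symm hne), hlt1⟩, hgirr⟩
  have hpq1' : ∀ k, 1 ≤ pq x k := by
    intro k
    have hmem := (hiter (k - 1)).1
    have h1 : (1 : ℝ) < 1 / gaussMap^[k - 1] x := one_lt_one_div hmem.1 hmem.2
    rw [pq, Nat.le_floor_iff (le_of_lt (lt_trans one_pos h1))]
    push_cast; linarith
  have hpq1 : ∀ k, (1 : ℝ) ≤ (pq x k : ℝ) := fun k => by exact_mod_cast hpq1' k
  obtain ⟨N, hN⟩ := Filter.eventually_atTop.mp hev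
  obtain ⟨n, hn_mem, hn_gt⟩ := hinf.exists_gt N
  have hn1 : 1 ≤ n := Nat.one_le_iff_ne_zero.mpr (by omega)
  -- split the product
  have hsplit : ∏ i ∈ Finset.range m, (pq x (n + i) : ℝ)
      = (pq x n : ℝ) * ∏ i ∈ Finset.range (m - 1), (pq x (n + 1 + i) : ℝ) := by
    have hm' : m = (m - 1) + 1 := by omega
    rw [hm', Finset.prod_range_succ']
    rw [mul_comm]
    congr 1
    · refine Finset.prod_congr rfl fun i _ => ?_
      congr 2
      omega
  have h1 : B₁ ^ n ≤ (pq x n : ℝ) * ∏ i ∈ Finset.range (m - 1), (pq x (n + 1 + i) : ℝ) := by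
    rw [← hsplit]; exact hn_mem
  have h3 : ∏ i ∈ Finset.range (m - 1), (pq x (n + 1 + i) : ℝ) < B₂ ^ n :=
    hN n (by omega)
  -- a_n ≤ ∏_{i < m-1} a_{(n-1)+1+i} < B₂^{n-1}
  have h4 : (pq x n : ℝ) < B₂ ^ (n - 1) := by
    obtain ⟨n', rfl⟩ : ∃ n', n = n' + 1 := ⟨n - 1, by omega⟩
    have h0mem : 0 ∈ Finset.range (m - 1) := Finset.mem_range.mpr (by omega)
    have hleN : pq x (n' + 1 + 0) ≤ ∏ i ∈ Finset.range (m - 1), pq x (n' + 1 + i) :=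
      Finset.single_le_prod' (fun i _ => hpq1' _) h0mem
    have hle : (pq x (n' + 1) : ℝ) ≤ ∏ i ∈ Finset.range (m - 1), (pq x (n' + 1 + i) : ℝ) := by
      rw [← Nat.cast_prod]
      exact_mod_cast hleN
    have h2 := hN n' (by omega)
    simpa using lt_of_le_of_lt hle h2
  have hpqn0 : (0 : ℝ) ≤ (pq x n : ℝ) := Nat.cast_nonneg _
  have hprod0 : (0 : ℝ) ≤ ∏ i ∈ Finset.range (m - 1), (pq x (n + 1 + i) : ℝ) :=
    Finset.prod_nonneg fun i _ => Nat.cast_nonneg _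
  have h5 : (pq x n : ℝ) * ∏ i ∈ Finset.range (m - 1), (pq x (n + 1 + i) : ℝ)
      < B₂ ^ (n - 1) * B₂ ^ n := mul_lt_mul'' h4 h3 hpqn0 hprod0
  -- B₂^2 ≤ B₁
  have hB₂0 : (0 : ℝ) < B₂ := by linarith
  have hsq : B₂ ^ 2 ≤ B₁ := by
    have h12 : (B₁ ^ ((1 : ℝ) / 2)) * (B₁ ^ ((1 : ℝ) / 2)) = B₁ := by
      rw [← Real.rpow_add (by linarith)]; norm_num
    nlinarith [Real.rpow_nonneg (le_of_lt (lt_trans one_pos hB₁)) ((1 : ℝ) / 2)]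
  have h6 : B₂ ^ (n - 1) * B₂ ^ n ≤ B₁ ^ n := by
    have e1 : B₂ ^ (n - 1) ≤ B₂ ^ n := pow_le_pow_right₀ (le_of_lt hB₂) (by omega)
    have e2 : B₂ ^ n * B₂ ^ n = (B₂ ^ 2) ^ n := by ring
    have e3 : (B₂ ^ 2) ^ n ≤ B₁ ^ n := pow_le_pow_left₀ (by positivity) hsq n
    nlinarith [pow_pos hB₂0 n, pow_pos hB₂0 (n - 1)]
  linarith
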